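/- Let S be a dominating set of the m×n king graph, and let B be a 2×2 block {2i−1,2i}×{2j−1,2j} (possibly truncated at the boundary) such that every earlier block (in the lexicographic order scanning left-to-right then top-to-bottom) contains its top-left corner in S, and B contains some element of S other than its top-left corner v = (2i−1, 2j−1). Then the symmetric difference S △ {v} is also a dominating set. -/

import Mathlib

/-- The `m × n` king graph: vertices are squares of an `m × n` board
(vertex `p` represents board square `(p.1.val + 1, p.2.val + 1)`), with
`p` adjacent to `q` iff `p ≠ q` and `max |x−x'| |y−y'| = 1`. -/
def kingGraph (m n : ℕ) : SimpleGraph (Fin m × Fin n) where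
  Adj p q := p ≠ q ∧
    max ((p.1.val : ℤ) - q.1.val).natAbs ((p.2.val : ℤ) - q.2.val).natAbs = 1
  symm := by
    constructor
    intro p q ⟨h1, h2⟩
    refine ⟨h1.symm, ?_⟩
    rw [show ((q.1.val : ℤ) - p.1.val) = -((p.1.val : ℤ) - q.1.val) by ring,
      show ((q.2.val : ℤ) - p.2.val) = -((p.2.val : ℤ) - q.2.val) by ring,
      Int.natAbs_neg, Int.natAbs_neg]
    exact h2
  loopless := by constructor; intro p ⟨h1, _⟩; exact h1 rfl

instance (m n : ℕ) : DecidableRel (kingGraph m n).Adj :=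
  fun p q => decidable_of_iff (p ≠ q ∧
    max ((p.1.val : ℤ) - q.1.val).natAbs ((p.2.val : ℤ) - q.2.val).natAbs = 1) Iff.rfl

/-- `S` is a dominating set: every vertex is in `S` or adjacent to a member of `S`. -/
def IsDomSet {V : Type*} (G : SimpleGraph V) (S : Finset V) : Prop :=
  ∀ v, v ∈ S ∨ ∃ u ∈ S, G.Adj u v

instance {V : Type*} [Fintype V] [DecidableEq V] (G : SimpleGraph V)
    [DecidableRel G.Adj] : DecidablePred (IsDomSet G) :=
  fun _ => inferInstanceAs (Decidable (∀ _, _ ∨ _))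


/- Board coordinates of a vertex `p` are `(p.1.val + 1, p.2.val + 1)`; thus `p` is
the top-left corner of its `2 × 2` block iff both board coordinates are odd, i.e.
iff `p.1.val` and `p.2.val` are both even.  The (0-based) block index of `p` is
`(p.1.val / 2, p.2.val / 2)`, and the scan order (left-to-right, then
top-to-bottom) is lexicographic in `(p.2.val / 2, p.1.val / 2)`. -/

/-- Let `S` be a dominating set of the `m × n` king graph and let `v` be the
top-left corner of a block `B` such that every strictly earlier block (in the scan
order) has its top-left corner in `S`, while `B` contains some element of `S`
other than `v`.  Then `S ∆ {v}` is also a dominating set. -/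
theorem king_flip_dominating (m n : ℕ) (S : Finset (Fin m × Fin n))
    (hS : IsDomSet (kingGraph m n) S)
    (v : Fin m × Fin n) (hv1 : Even v.1.val) (hv2 : Even v.2.val)
    (hearlier : ∀ w : Fin m × Fin n, Even w.1.val → Even w.2.val →
      (w.2.val / 2 < v.2.val / 2 ∨
        (w.2.val / 2 = v.2.val / 2 ∧ w.1.val / 2 < v.1.val / 2)) → w ∈ S)
    (hother : ∃ w ∈ S, w ≠ v ∧ w.1.val / 2 = v.1.val / 2 ∧ w.2.val / 2 = v.2.val / 2) :
    IsDomSet (kingGraph m n) (symmDiff S {v}) := by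
  classical
  obtain ⟨w, hwS, hwv, hw1, hw2⟩ := hother
  obtain ⟨r, hr⟩ := hv1
  obtain ⟨s, hs⟩ := hv2
  intro u
  by_cases hvS : v ∈ S
  · -- main case: v ∈ S, so symmDiff removes v
    have hmem : ∀ c : Fin m × Fin n, c ∈ S → c ≠ v → c ∈ symmDiff S {v} := by
      intro c hc hcv
      rw [Finset.mem_symmDiff]
      exact Or.inl ⟨hc, by simpa using hcv⟩
    have key : ((u.1.val : ℤ) - v.1.val).natAbs ≤ 1 →
        ((u.2.val : ℤ) - v.2.val).natAbs ≤ 1 →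
        ∃ c ∈ S, c ≠ v ∧ (c = u ∨ (kingGraph m n).Adj c u) := by
      intro hx hy
      by_cases hyb : u.2.val < v.2.val
      · -- u in the column strip above v's block
        have hb2 : 2 ≤ v.2.val := by omega
        refine ⟨(⟨u.1.val - u.1.val % 2, by omega⟩, ⟨v.2.val - 2, by omega⟩),
          ?_, ?_, Or.inr ⟨?_, ?_⟩⟩
        · exact hearlier _ ⟨u.1.val / 2, show u.1.val - u.1.val % 2 = u.1.val / 2 + u.1.val / 2 by omega⟩ ⟨s - 1, show v.2.val - 2 = (s - 1) + (s - 1) by omega⟩ (Or.inl (show (v.2.val - 2) / 2 < v.2.val / 2 by omega))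
        · simp [Prod.ext_iff, Fin.ext_iff]; omega
        · simp [Prod.ext_iff, Fin.ext_iff]; omega
        · simp only []; omega
      · by_cases hxa : u.1.val < v.1.val
        · -- u in the row to the left, same column strip
          have ha2 : 2 ≤ v.1.val := by omega
          refine ⟨(⟨v.1.val - 2, by omega⟩, ⟨u.2.val - u.2.val % 2, by omega⟩),
            ?_, ?_, Or.inr ⟨?_, ?_⟩⟩
          · exact hearlier _ ⟨r - 1, show v.1.val - 2 = (r - 1) + (r - 1) by omega⟩
              ⟨u.2.val / 2, show u.2.val - u.2.val % 2 = u.2.val / 2 + u.2.val / 2 by omega⟩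
              (Or.inr ⟨show (u.2.val - u.2.val % 2) / 2 = v.2.val / 2 by omega,
                show (v.1.val - 2) / 2 < v.1.val / 2 by omega⟩)
          · simp [Prod.ext_iff, Fin.ext_iff]; omega
          · simp [Prod.ext_iff, Fin.ext_iff]; omega
          · simp only []; omega
        · -- u inside v's block: w works
          by_cases hwu : w = u
          · exact ⟨w, hwS, hwv, Or.inl hwu⟩
          · refine ⟨w, hwS, hwv, Or.inr ⟨hwu, ?_⟩⟩
            have hne : w.1.val ≠ u.1.val ∨ w.2.val ≠ u.2.val := by
              by_contra h
              push_neg at h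
              exact hwu (Prod.ext (Fin.ext h.1) (Fin.ext h.2))
            omega
    have finish : (∃ c ∈ S, c ≠ v ∧ (c = u ∨ (kingGraph m n).Adj c u)) →
        u ∈ symmDiff S {v} ∨ ∃ t ∈ symmDiff S {v}, (kingGraph m n).Adj t u := by
      rintro ⟨c, hcS, hcv, hc⟩
      rcases hc with rfl | hadj
      · exact Or.inl (hmem _ hcS hcv)
      · exact Or.inr ⟨c, hmem _ hcS hcv, hadj⟩
    rcases hS u with hu | ⟨t, htS, hadj⟩
    · by_cases huv : u = v
      · subst huv
        exact finish (key (by simp) (by simp))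
      · exact Or.inl (hmem _ hu huv)
    · by_cases htv : t = v
      · subst htv
        obtain ⟨_, hmax⟩ := hadj
        exact finish (key (by omega) (by omega))
      · exact Or.inr ⟨t, hmem _ htS htv, hadj⟩
  · -- v ∉ S: symmDiff adds v, S ⊆ symmDiff S {v}
    have hsub : ∀ c : Fin m × Fin n, c ∈ S → c ∈ symmDiff S {v} := by
      intro c hc
      rw [Finset.mem_symmDiff]
      refine Or.inl ⟨hc, ?_⟩
      simp only [Finset.mem_singleton]
      rintro rfl; exact hvS hc
    rcases hS u with hu | ⟨t, htS, hadj⟩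
    · exact Or.inl (hsub _ hu)
    · exact Or.inr ⟨t, hsub _ htS, hadj⟩
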